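/- Let K be a real symmetric positive semidefinite n×n matrix, let γ ≥ 0, and suppose λ_min(K) ≥ 3γ. Then K − γG is positive semidefinite, where G = G(a,b,c) is the canonical gradient matrix of a triplet of distinct indices. (Hence no projection onto the PSD cone is needed after such a stochastic gradient step.) -/

import Mathlib

/-- The canonical gradient matrix `G(a,b,c)` of a triplet of indices. -/
def canonG {n : ℕ} (a b c : Fin n) : Matrix (Fin n) (Fin n) ℝ :=
  fun i j =>
    if (i = a ∧ j = b) ∨ (i = b ∧ j = a) then -2
    else if (i = a ∧ j = c) ∨ (i = c ∧ j = a) then 2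
    else if i = b ∧ j = b then 1
    else if i = c ∧ j = c then -1
    else 0

open Matrix

lemma canonG_eq {n : ℕ} (a b c : Fin n) (hab : a ≠ b) (hac : a ≠ c) (hbc : b ≠ c) :
    canonG a b c = (-2 : ℝ) • (single a b 1 + single b a 1)
      + (2 : ℝ) • (single a c 1 + single c a 1)
      + single b b 1 - single c c 1 := by
  ext i j
  by_cases hia : i = a <;> by_cases hib : i = b <;> by_cases hic : i = c <;>
  by_cases hja : j = a <;> by_cases hjb : j = b <;> by_cases hjc : j = c <;>
    simp_all [canonG, Matrix.single, Matrix.of_apply, eq_comm]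

lemma quadform_canonG {n : ℕ} (a b c : Fin n) (hab : a ≠ b) (hac : a ≠ c) (hbc : b ≠ c)
    (x : Fin n → ℝ) :
    x ⬝ᵥ (canonG a b c *ᵥ x) = -4 * (x a * x b) + 4 * (x a * x c) + x b ^ 2 - x c ^ 2 := by
  rw [canonG_eq a b c hab hac hbc]
  simp only [sub_mulVec, add_mulVec, smul_mulVec, single_mulVec,
    dotProduct_add, dotProduct_sub, dotProduct_smul]
  have h : ∀ (i j : Fin n), x ⬝ᵥ Function.update (0 : Fin n → ℝ) i (1 * x j) = x i * x j := by
    intro i j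
    rw [show Function.update (0 : Fin n → ℝ) i (1 * x j) = Pi.single i (1 * x j) from rfl,
      dotProduct_single]
    ring
  simp only [h, smul_eq_mul]
  ring

lemma three_sub_canonG_psd {n : ℕ} (a b c : Fin n) (hab : a ≠ b) (hac : a ≠ c) (hbc : b ≠ c)
    (x : Fin n → ℝ) :
    x ⬝ᵥ (canonG a b c *ᵥ x) ≤ 3 * (x ⬝ᵥ x) := by
  rw [quadform_canonG a b c hab hac hbc]
  have key : -4 * (x a * x b) + 4 * (x a * x c) + x b ^ 2 - x c ^ 2
      ≤ 3 * (x a ^ 2 + x b ^ 2 + x c ^ 2) := by nlinarith [sq_nonneg (x a + x b), sq_nonneg (x a - 2 * x c)]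
  refine key.trans ?_
  have : x a ^ 2 + x b ^ 2 + x c ^ 2 ≤ x ⬝ᵥ x := by
    have h1 : x a ^ 2 + x b ^ 2 + x c ^ 2 = ∑ i ∈ ({a, b, c} : Finset (Fin n)), x i ^ 2 := by
      rw [Finset.sum_insert (by simp [hab, hac]), Finset.sum_insert (by simp [hbc]),
        Finset.sum_singleton]
      ring_nf
    rw [dotProduct, h1]

    have := Finset.sum_le_sum_of_subset_of_nonneg
      (Finset.subset_univ ({a, b, c} : Finset (Fin n)))
      (fun i _ _ => sq_nonneg (x i))
    simpa [sq] using this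
  linarith

/-- If `K` is PSD and `λ_min(K) ≥ 3γ` with `γ ≥ 0`, then `K - γ • G(a,b,c)` is PSD. -/
theorem posSemidef_sub_smul_canonG {n : ℕ} (hn : 3 ≤ n) (a b c : Fin n)
    (hab : a ≠ b) (hac : a ≠ c) (hbc : b ≠ c)
    (K : Matrix (Fin n) (Fin n) ℝ) (hK : K.PosSemidef) (γ : ℝ) (hγ : 0 ≤ γ)
    (hmin : 3 * γ ≤ ⨅ j : Fin n, hK.1.eigenvalues j) :
    (K - γ • canonG a b c).PosSemidef := by
  have hne : Nonempty (Fin n) := ⟨⟨0, by omega⟩⟩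
  have hev : ∀ j, 3 * γ ≤ hK.1.eigenvalues j := fun j =>
    hmin.trans (ciInf_le (Finite.bddBelow_range _) j)
  -- K - 3γ•1 is PSD
  have h1 : (K - (3 * γ) • (1 : Matrix (Fin n) (Fin n) ℝ)).PosSemidef := by
    have hU := hK.1.spectral_theorem
    rw [Unitary.conjStarAlgAut_apply] at hU
    set U : Matrix (Fin n) (Fin n) ℝ := (hK.1.eigenvectorUnitary : Matrix (Fin n) (Fin n) ℝ)
    have hUU : U * star U = 1 := (Matrix.mem_unitaryGroup_iff).mp hK.1.eigenvectorUnitary.2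
    have hdecomp : K - (3 * γ) • 1
        = U * (Matrix.diagonal (fun j => hK.1.eigenvalues j - 3 * γ)) * star U := by
      have : (Matrix.diagonal (fun j => hK.1.eigenvalues j - 3 * γ))
          = Matrix.diagonal (RCLike.ofReal ∘ hK.1.eigenvalues) - (3 * γ) • 1 := by
        simp [Matrix.diagonal_sub, Matrix.smul_one_eq_diagonal, sub_eq_add_neg,
          ← Matrix.diagonal_add]
      rw [this, Matrix.mul_sub, Matrix.sub_mul, ← hU]
      congr 1
      rw [Matrix.mul_smul, Matrix.smul_mul, mul_one, hUU]
    rw [hdecomp]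
    exact (Matrix.posSemidef_diagonal_iff.mpr fun j => by linarith [hev j]).mul_mul_conjTranspose_same U
  -- (3γ)•1 - γ•G is PSD
  have h2 : ((3 * γ) • (1 : Matrix (Fin n) (Fin n) ℝ) - γ • canonG a b c).PosSemidef := by
    refine Matrix.PosSemidef.of_dotProduct_mulVec_nonneg ?_ ?_
    · have hG : (canonG a b c).IsHermitian := by
        ext i j
        simp only [Matrix.conjTranspose_apply, canonG, star_trivial]
        by_cases hia : i = a <;> by_cases hib : i = b <;> by_cases hic : i = c <;>
        by_cases hja : j = a <;> by_cases hjb : j = b <;> by_cases hjc : j = c <;>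
          simp_all [eq_comm]
      rw [Matrix.IsHermitian, Matrix.conjTranspose_sub, Matrix.conjTranspose_smul,
        Matrix.conjTranspose_smul, Matrix.conjTranspose_one, hG.eq, star_trivial, star_trivial]
    · intro x
      have := three_sub_canonG_psd a b c hab hac hbc x
      simp only [star_trivial, sub_mulVec, smul_mulVec, one_mulVec,
        dotProduct_sub, dotProduct_smul, smul_eq_mul]
      have hxx : (0:ℝ) ≤ x ⬝ᵥ x := Finset.sum_nonneg fun i _ => mul_self_nonneg (x i)
      nlinarith [this, hγ, hxx]
  have := h1.add h2
  convert this using 1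
  abel
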